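/- Let 𝒫 = {(a₂₁, tr A, det A) ∈ ℂ³ : A = [aᵢⱼ] is a 2×2 complex matrix with operator norm ‖A‖ < 1} (the pentablock). Suppose (s,p) ∈ ℂ² satisfies s = conj(s)·p, |p| = 1 and |s| ≤ 2. Then for every a ∈ ℂ, the point (a, s, p) lies in the closure of 𝒫 in ℂ³ if and only if |a|² ≤ 1 − |s|²/4. -/

import Mathlib

set_option maxHeartbeats 4000000
set_option synthInstance.maxHeartbeats 4000000

/-- The pentablock: the image of the open unit ball (operator norm) of `2 × 2` complex
matrices under `A ↦ (a₂₁, tr A, det A)`. -/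
noncomputable def pentablock : Set (ℂ × ℂ × ℂ) :=
  {x | ∃ A : Matrix (Fin 2) (Fin 2) ℂ,
    ‖Matrix.toEuclideanCLM (𝕜 := ℂ) (n := Fin 2) A‖ < 1 ∧
    x = (A 1 0, Matrix.trace A, Matrix.det A)}

open Complex Matrix Filter


lemma colb (A : Matrix (Fin 2) (Fin 2) ℂ)
    (h : ‖Matrix.toEuclideanCLM (𝕜 := ℂ) (n := Fin 2) A‖ ≤ 1) (j : Fin 2) :
    ‖A 0 j‖ ^ 2 + ‖A 1 j‖ ^ 2 ≤ 1 := by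
  set T := Matrix.toEuclideanCLM (𝕜 := ℂ) (n := Fin 2) A with hT
  set x : EuclideanSpace ℂ (Fin 2) := EuclideanSpace.single j 1 with hxdef
  have hx : ‖T x‖ ≤ 1 := by
    calc ‖T x‖ ≤ ‖T‖ * ‖x‖ := T.le_opNorm _
      _ ≤ 1 := by rw [hxdef, EuclideanSpace.norm_single]; simpa using h
  have hTx : T x = (WithLp.equiv 2 (Fin 2 → ℂ)).symm (fun i => A i j) := by
    rw [hxdef]
    show T ((WithLp.equiv 2 (Fin 2 → ℂ)).symm (Pi.single j 1)) = _
    rw [hT, WithLp.equiv_symm_apply, Matrix.toEuclideanCLM_toLp]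
    congr 1
    simp [Matrix.toLin'_apply, Matrix.mulVec_single]
    rfl
  have hnorm : ‖T x‖ ^ 2 = ‖A 0 j‖ ^ 2 + ‖A 1 j‖ ^ 2 := by
    rw [hTx, EuclideanSpace.norm_eq, Real.sq_sqrt (by positivity)]
    simp [Fin.sum_univ_two]
  nlinarith [norm_nonneg (T x)]

lemma rowb (A : Matrix (Fin 2) (Fin 2) ℂ)
    (h : ‖Matrix.toEuclideanCLM (𝕜 := ℂ) (n := Fin 2) A‖ ≤ 1) (i : Fin 2) :
    ‖A i 0‖ ^ 2 + ‖A i 1‖ ^ 2 ≤ 1 := by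
  have h' : ‖Matrix.toEuclideanCLM (𝕜 := ℂ) (n := Fin 2) (star A)‖ ≤ 1 := by
    rw [map_star, ContinuousLinearMap.star_eq_adjoint]
    exact le_trans (le_of_eq (ContinuousLinearMap.adjoint.norm_map _)) h
  have := colb (star A) h' i
  simpa [Matrix.star_apply] using this

lemma forward_bound : pentablock ⊆
    {x : ℂ × ℂ × ℂ | ‖x.1‖ ^ 2 ≤ 1 - ‖x.2.1‖ ^ 2 / 4} := by
  rintro ⟨a, s, p⟩ ⟨A, hA, heq⟩
  simp only [Prod.mk.injEq] at heq
  obtain ⟨ha, hs, -⟩ := heq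
  have h1 := colb A hA.le 0
  have h2 := rowb A hA.le 1
  have h3 : ‖s‖ ≤ ‖A 0 0‖ + ‖A 1 1‖ := by
    rw [hs, Matrix.trace_fin_two]; exact norm_add_le _ _
  have h4 : ‖s‖ ^ 2 ≤ (‖A 0 0‖ + ‖A 1 1‖) ^ 2 :=
    pow_le_pow_left₀ (norm_nonneg s) h3 2
  have h5 := sq_nonneg (‖A 0 0‖ - ‖A 1 1‖)
  simp only [Set.mem_setOf_eq, ha]
  nlinarith

lemma closure_forward : closure pentablock ⊆
    {x : ℂ × ℂ × ℂ | ‖x.1‖ ^ 2 ≤ 1 - ‖x.2.1‖ ^ 2 / 4} := by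
  apply closure_minimal forward_bound
  · exact isClosed_le ((continuous_norm.comp continuous_fst).pow 2)
      (continuous_const.sub (((continuous_norm.comp (continuous_fst.comp continuous_snd)).pow 2).div_const 4))

lemma exists_eigs (s p : ℂ) (h₁ : s = (starRingEnd ℂ) s * p)
    (h₂ : ‖p‖ = 1) (h₃ : ‖s‖ ≤ 2) :
    ∃ lam mu : ℂ, (starRingEnd ℂ) lam * lam = 1 ∧ (starRingEnd ℂ) mu * mu = 1 ∧
      lam + mu = s ∧ lam * mu = p ∧
      ‖lam - mu‖ ^ 2 = 4 - ‖s‖ ^ 2 := by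
  have hp0 : p ≠ 0 := by intro h; rw [h] at h₂; simp at h₂
  set q : ℂ := Complex.exp (Complex.log p / 2) with hqdef
  have hq2 : q ^ 2 = p := by
    rw [hqdef, sq, ← Complex.exp_add, add_halves]
    exact Complex.exp_log hp0
  have hqa : ‖q‖ = 1 := by
    have h1 : ‖q‖ ^ 2 = 1 := by rw [← norm_pow, hq2, h₂]
    nlinarith [norm_nonneg q]
  have hq0 : q ≠ 0 := by
    intro h; rw [h] at hqa; simp at hqa
  have hqc : (starRingEnd ℂ) q * q = 1 := by
    have := Complex.mul_conj q
    rw [Complex.normSq_eq_norm_sq, hqa] at this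
    rw [mul_comm]; rw [this]; norm_num
  -- t = s / q is real
  have hqc0 : (starRingEnd ℂ) q ≠ 0 := by
    simpa using hq0
  have ht : (starRingEnd ℂ) (s / q) = s / q := by
    rw [map_div₀]
    field_simp
    linear_combination (-(starRingEnd ℂ) q) * h₁ + (starRingEnd ℂ) q * (starRingEnd ℂ) s * hq2 - (starRingEnd ℂ) s * q * hqc
  obtain ⟨T, hT⟩ : ∃ T : ℝ, (T : ℂ) = s / q := ⟨(s/q).re, Complex.conj_eq_iff_re.mp ht⟩
  have hsqT : s = q * T := by
    rw [hT]; field_simp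
  have hTle : |T| ≤ 2 := by
    have : ‖(T : ℂ)‖ = ‖s‖ / ‖q‖ := by
      rw [hT, norm_div]
    rw [Complex.norm_real, Real.norm_eq_abs, hqa, div_one] at this
    rw [this]; exact h₃
  have hT4 : 4 - T ^ 2 ≥ 0 := by nlinarith [abs_nonneg T, _root_.sq_abs T]
  set u : ℝ := Real.sqrt (4 - T ^ 2) with hudef
  have hu0 : 0 ≤ u := Real.sqrt_nonneg _
  have hu2 : (u : ℝ) ^ 2 = 4 - T ^ 2 := Real.sq_sqrt hT4
  have hu2c : (u : ℂ) ^ 2 = 4 - (T : ℂ) ^ 2 := by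
    have := congrArg (Complex.ofReal) hu2
    push_cast at this
    exact this
  refine ⟨q * (T + u * I) / 2, q * (T - u * I) / 2, ?_, ?_, ?_, ?_, ?_⟩
  · simp only [map_div₀, _root_.map_mul, map_add, Complex.conj_ofReal, Complex.conj_I, map_ofNat]
    linear_combination (((T:ℂ) ^ 2 - (u:ℂ) ^ 2 * I ^ 2) / 4) * hqc - ((u:ℂ)^2/4) * Complex.I_sq + (1/4 : ℂ) * hu2c
  · simp only [map_div₀, _root_.map_mul, map_add, map_sub, Complex.conj_ofReal, Complex.conj_I, map_ofNat]
    linear_combination (((T:ℂ) ^ 2 - (u:ℂ) ^ 2 * I ^ 2) / 4) * hqc - ((u:ℂ)^2/4) * Complex.I_sq + (1/4 : ℂ) * hu2c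
  · linear_combination -hsqT
  · linear_combination (((T:ℂ)^2 - (u:ℂ)^2 * I^2)/4) * hq2 - (p * (u:ℂ)^2/4) * Complex.I_sq + (p/4) * hu2c
  · have hd : q * (T + u * I) / 2 - q * (T - u * I) / 2 = q * u * I := by ring
    rw [hd]
    simp only [norm_mul, Complex.norm_I, Complex.norm_real, Real.norm_eq_abs, hqa, mul_one, one_mul]
    rw [_root_.abs_of_nonneg hu0]
    have hsa : ‖s‖ = |T| := by
      rw [hsqT]
      simp [Complex.norm_real, hqa]
    rw [hsa, _root_.sq_abs]
    exact hu2

lemma exists_cw (a D : ℂ) (h : 2 * ‖a‖ ≤ ‖D‖) :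
    ∃ (c : ℝ) (w : ℂ), 0 ≤ c ∧
      (starRingEnd ℂ) w * w = ((1 - c ^ 2 : ℝ) : ℂ) ∧ (c : ℂ) * w * D = a := by
  set z : ℂ := a / D with hz
  have hzD : z * D = a := by
    rcases eq_or_ne D 0 with hD | hD
    · have : ‖a‖ = 0 := by
        have := norm_nonneg a
        rw [hD] at h; simp at h; nlinarith
      rw [hD, norm_eq_zero.mp this]; ring
    · rw [hz]; field_simp
  set m : ℝ := ‖z‖ with hm
  have hm0 : 0 ≤ m := norm_nonneg z
  have hm12 : m ≤ 1 / 2 := by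
    rcases eq_or_ne D 0 with hD | hD
    · have : ‖a‖ = 0 := by
        have := norm_nonneg a
        rw [hD] at h; simp at h; nlinarith
      rw [hm, hz, hD]; simp
    · have hDpos : 0 < ‖D‖ := by
        simpa [norm_pos_iff] using hD
      rw [hm, hz, norm_div, div_le_div_iff₀ hDpos (by norm_num : (0:ℝ) < 2)]
      linarith
  set R : ℝ := Real.sqrt (1 - 4 * m ^ 2) with hR
  have hR0 : 0 ≤ R := Real.sqrt_nonneg _
  have hR2 : R ^ 2 = 1 - 4 * m ^ 2 := Real.sq_sqrt (by nlinarith)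
  set c : ℝ := Real.sqrt ((1 + R) / 2) with hc
  have hcpos : 0 < c := Real.sqrt_pos.mpr (by nlinarith)
  have hc2 : c ^ 2 = (1 + R) / 2 := Real.sq_sqrt (by nlinarith)
  have hcne : (c : ℂ) ≠ 0 := by exact_mod_cast hcpos.ne'
  refine ⟨c, z / (c : ℂ), hcpos.le, ?_, ?_⟩
  · have hzz : (starRingEnd ℂ) z * z = ((m ^ 2 : ℝ) : ℂ) := by
      rw [mul_comm, Complex.mul_conj, Complex.normSq_eq_norm_sq, ← hm]
    rw [map_div₀, Complex.conj_ofReal]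
    have key : (m ^ 2 : ℝ) = c ^ 2 * (1 - c ^ 2) := by nlinarith
    field_simp
    rw [hzz]
    push_cast [key]
    ring
  · have hcc : (c : ℂ) * (z / (c : ℂ)) = z := mul_div_cancel₀ z hcne
    rw [hcc]
    exact hzD

lemma build_matrix (lam mu w : ℂ) (c : ℝ)
    (hlam : (starRingEnd ℂ) lam * lam = 1) (hmu : (starRingEnd ℂ) mu * mu = 1)
    (hw : (starRingEnd ℂ) w * w = ((1 - c ^ 2 : ℝ) : ℂ)) :
    ∃ A : Matrix (Fin 2) (Fin 2) ℂ, star A * A = 1 ∧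
      A 1 0 = (c : ℂ) * w * (lam - mu) ∧
      Matrix.trace A = lam + mu ∧ Matrix.det A = lam * mu := by
  have hwc : (starRingEnd ℂ) w * w = 1 - (c : ℂ) ^ 2 := by
    rw [hw]; push_cast; ring
  refine ⟨!![(c:ℂ)^2 * lam + (1 - (c:ℂ)^2) * mu, (c:ℂ) * (starRingEnd ℂ) w * (lam - mu);
             (c:ℂ) * w * (lam - mu), (1 - (c:ℂ)^2) * lam + (c:ℂ)^2 * mu], ?_, by simp, ?_, ?_⟩
  · ext i j
    fin_cases i <;> fin_cases j <;>
      simp only [Matrix.mul_apply, Fin.sum_univ_two, Matrix.star_apply, Matrix.one_apply,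
        Matrix.cons_val', Matrix.cons_val_zero, Matrix.cons_val_one, Matrix.head_cons,
        Matrix.head_fin_const, Matrix.empty_val', Matrix.cons_val_fin_one, Matrix.of_apply,
        _root_.map_mul, map_add, map_sub, map_pow, _root_.map_one, Complex.conj_ofReal,
        Complex.conj_conj, Fin.isValue, Matrix.cons_val_one, if_true, if_false] <;>
      norm_num
    · linear_combination (c:ℂ)^2 * hlam + (1 - (c:ℂ)^2) * hmu +
        (c:ℂ)^2 * ((starRingEnd ℂ) lam - (starRingEnd ℂ) mu) * (lam - mu) * hwc
    · linear_combination ((c:ℂ) * (starRingEnd ℂ) w) * hlam - ((c:ℂ) * (starRingEnd ℂ) w) * hmu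
    · linear_combination ((c:ℂ) * w) * hlam - ((c:ℂ) * w) * hmu
    · linear_combination (1 - (c:ℂ)^2) * hlam + (c:ℂ)^2 * hmu +
        (c:ℂ)^2 * ((starRingEnd ℂ) lam - (starRingEnd ℂ) mu) * (lam - mu) * hwc
  · simp [Matrix.trace_fin_two]
    ring
  · simp [Matrix.det_fin_two]
    linear_combination -((c:ℂ)^2 * (lam - mu)^2) * hwc

lemma norm_le_one_of_unitary (A : Matrix (Fin 2) (Fin 2) ℂ) (h : star A * A = 1) :
    ‖Matrix.toEuclideanCLM (𝕜 := ℂ) (n := Fin 2) A‖ ≤ 1 := by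
  set T := Matrix.toEuclideanCLM (𝕜 := ℂ) (n := Fin 2) A with hT
  have h1 : star T * T = 1 := by
    rw [hT, ← map_star, ← _root_.map_mul, h, _root_.map_one]
  have h2 : ‖star T * T‖ = ‖T‖ * ‖T‖ := CStarRing.norm_star_mul_self (x := T)
  rw [h1] at h2
  have h3 : ‖(1 : EuclideanSpace ℂ (Fin 2) →L[ℂ] EuclideanSpace ℂ (Fin 2))‖ = 1 :=
    norm_one
  rw [h3] at h2
  nlinarith [norm_nonneg T]

lemma mem_closure_of_matrix (a s p : ℂ) (A : Matrix (Fin 2) (Fin 2) ℂ)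
    (hn : ‖Matrix.toEuclideanCLM (𝕜 := ℂ) (n := Fin 2) A‖ ≤ 1)
    (ha : A 1 0 = a) (hs : Matrix.trace A = s) (hp : Matrix.det A = p) :
    (a, s, p) ∈ closure pentablock := by
  apply mem_closure_of_tendsto (f := fun r : ℝ => (((r:ℂ)) * a, ((r:ℂ)) * s, ((r:ℂ))^2 * p))
    (b := nhdsWithin (1:ℝ) (Set.Iio 1))
  · have hc : Continuous (fun r : ℝ => (((r:ℂ)) * a, ((r:ℂ)) * s, ((r:ℂ))^2 * p)) := by
      continuity
    have h2 := (hc.tendsto 1).mono_left (nhdsWithin_le_nhds (s := Set.Iio (1:ℝ)))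
    simpa using h2
  · filter_upwards [Ioo_mem_nhdsLT_of_mem (by norm_num : (1:ℝ) ∈ Set.Ioc (0:ℝ) 1)] with r hr
    refine ⟨((r:ℂ)) • A, ?_, ?_⟩
    · rw [_root_.map_smul]
      rw [norm_smul ((r:ℂ)) (Matrix.toEuclideanCLM (𝕜 := ℂ) (n := Fin 2) A)]
      have h1 : ‖((r:ℂ))‖ = |r| := Complex.norm_real r
      rw [h1, abs_of_pos hr.1]
      calc r * ‖Matrix.toEuclideanCLM (𝕜 := ℂ) (n := Fin 2) A‖ ≤ r * 1 :=
            mul_le_mul_of_nonneg_left hn hr.1.le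
        _ < 1 := by linarith [hr.2]
    · simp [Matrix.smul_apply, Matrix.trace_smul, Matrix.det_smul, smul_eq_mul,
        Fintype.card_fin, ha, hs, hp]


/-- If `(s,p)` lies in the distinguished boundary of the symmetrized bidisc
(`s = s̄ p`, `|p| = 1`, `|s| ≤ 2`), then for any `a ∈ ℂ`, the point `(a,s,p)` lies in the
closure of the pentablock iff `|a|² ≤ 1 - |s|²/4`. -/
theorem statement0 (s p : ℂ) (h₁ : s = (starRingEnd ℂ) s * p)
    (h₂ : ‖p‖ = 1) (h₃ : ‖s‖ ≤ 2) (a : ℂ) :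
    (a, s, p) ∈ closure pentablock ↔
      ‖a‖ ^ 2 ≤ 1 - ‖s‖ ^ 2 / 4 := by
  constructor
  · intro h
    exact closure_forward h
  · intro ha
    obtain ⟨lam, mu, hlam, hmu, hsum, hprod, hdiff⟩ := exists_eigs s p h₁ h₂ h₃
    have hD : 2 * ‖a‖ ≤ ‖lam - mu‖ := by
      nlinarith [norm_nonneg a, norm_nonneg (lam - mu)]
    obtain ⟨c, w, hc0, hw, hcw⟩ := exists_cw a (lam - mu) hD
    obtain ⟨A, hU, hA10, hAtr, hAdet⟩ := build_matrix lam mu w c hlam hmu hw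
    exact mem_closure_of_matrix a s p A (norm_le_one_of_unitary A hU)
      (hA10.trans hcw) (hAtr.trans hsum) (hAdet.trans hprod)
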